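/- Fix ρ ∈ (0, cot²θ) and a Lipschitz cutoff χ : ℝ → [0,1] with χ(t) = 1 for |t| ≤ 1 and χ(t) = 0 for |t| ≥ 2, and for n > 0 set h_n(x₂) = F(x₂ tan θ)^ρ · χ(x₂/n). Then there exists n₀ > 0 such that R(h_n) < 0 for all n ≥ n₀. -/

import Mathlib

open Real MeasureTheory Set Filter

/-- `F α t = ∫_{-∞}^t e^{-α|x|} dx`. -/
noncomputable def F (α t : ℝ) : ℝ := ∫ x in Iio t, exp (-α * |x|)

/-- The half-plane-like domain `Ω = {(x₁,x₂) : x₁ < x₂ tan θ}`. -/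
def Omg (θ : ℝ) : Set (ℝ × ℝ) := {p | p.1 < p.2 * tan θ}

/-- The functional `R(g) = ∫ g'·(g'·F(x tanθ) − g·e^{-α|x|tanθ}·cot θ) dx`. -/
noncomputable def Rfun (α θ : ℝ) (g : ℝ → ℝ) : ℝ :=
  ∫ x : ℝ, deriv g x *
    (deriv g x * F α (x * tan θ) - g x * exp (-α * |x| * tan θ) * cot θ)

/-- The quantity `Λ(θ)` from the upper bound for the lowest eigenvalue. -/
noncomputable def Lam (θ : ℝ) : ℝ :=
  3 * cos θ ^ 6 * ((2:ℝ) ^ (2 * cos θ ^ 2) - 1) ^ 2 /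
    (2 * (1 + 2 * cos θ ^ 2) ^ 3 *
      (108 + 180 * cos θ ^ 2 - 132 * cos θ ^ 4 + 45 * cos θ ^ 6 - 5 * cos θ ^ 8))



section Fbasics
variable {α : ℝ}

lemma EMA.cont : Continuous (fun x : ℝ => exp (-α * |x|)) := by fun_prop

lemma EMA.integrable (hα : 0 < α) : Integrable (fun x : ℝ => exp (-α * |x|)) := by
  have h1 : IntegrableOn (fun x : ℝ => exp (-α * |x|)) (Ioi 0) := by
    refine (exp_neg_integrableOn_Ioi 0 hα).congr_fun (fun x hx => ?_) measurableSet_Ioi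
    rw [abs_of_pos hx]
  have h2 : IntegrableOn (fun x : ℝ => exp (-α * |x|)) (Iic 0) := by
    have m : MeasurableEmbedding fun x : ℝ => -x := (Homeomorph.neg ℝ).measurableEmbedding
    have h3 : IntegrableOn (fun x : ℝ => exp (-α * |x|)) (Iic 0)
        (Measure.map (fun x : ℝ => -x) volume) := by
      rw [m.integrableOn_map_iff]
      simp_rw [Function.comp_def, abs_neg, neg_preimage, neg_Iic, neg_zero]
      exact (integrableOn_Ici_iff_integrableOn_Ioi).mpr h1
    rwa [Measure.map_neg_eq_self (volume : Measure ℝ)] at h3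
  have := h2.union h1
  rwa [IntegrableOn, Iic_union_Ioi, Measure.restrict_univ] at this

lemma integral_exp_mul_Iio {c : ℝ} (hc : 0 < c) (t : ℝ) :
    ∫ x in Iio t, exp (c * x) = exp (c * t) / c := by
  rw [← integral_Iic_eq_integral_Iio, show Iic t = Iic (-(-t)) by ring_nf,
    ← integral_comp_neg_Ioi]
  have : ∀ x : ℝ, exp (c * -x) = (fun y => exp (-y)) (c * x) := by
    intro x; simp [mul_neg, neg_mul]
  simp_rw [this]
  rw [integral_comp_mul_left_Ioi (fun y => exp (-y)) (-t) hc, integral_exp_neg_Ioi]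
  rw [smul_eq_mul, mul_neg, neg_neg, div_eq_inv_mul]

lemma F_of_nonpos (hα : 0 < α) {t : ℝ} (ht : t ≤ 0) : F α t = exp (α * t) / α := by
  rw [F, setIntegral_congr_fun measurableSet_Iio (g := fun x => exp (α * x))
    (fun x hx => by rw [abs_of_neg (lt_of_lt_of_le hx ht)]; ring_nf),
    integral_exp_mul_Iio hα]

lemma F_mono (hα : 0 < α) : Monotone (F α) := fun a b hab => by
  refine setIntegral_mono_set (EMA.integrable hα).integrableOn
    (Eventually.of_forall fun x => (exp_pos _).le) (HasSubset.Subset.eventuallyLE (Iio_subset_Iio hab))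

lemma F_pos (hα : 0 < α) (t : ℝ) : 0 < F α t := by
  have h1 : F α (min t 0) ≤ F α t := F_mono hα (min_le_left _ _)
  have h2 : 0 < F α (min t 0) := by
    rw [F_of_nonpos hα (min_le_right _ _)]
    positivity
  linarith

lemma F_le (hα : 0 < α) (t : ℝ) : F α t ≤ 2 / α := by
  have h1 : F α t ≤ ∫ x : ℝ, exp (-α * |x|) :=
    setIntegral_le_integral (EMA.integrable hα)
      (Eventually.of_forall fun x => (exp_pos _).le)
  have h2 : ∫ x : ℝ, exp (-α * |x|) = 2 / α := by
    rw [integral_comp_abs (f := fun y : ℝ => exp (-α * y))]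
    have : ∫ x in Ioi (0:ℝ), exp (-α * x) = ∫ x in Iic (0:ℝ), exp (α * x) := by
      rw [show Iic (0:ℝ) = Iic (-0) by norm_num, ← integral_comp_neg_Ioi]
      congr 1; funext x; ring_nf
    rw [this, integral_Iic_eq_integral_Iio, integral_exp_mul_Iio hα, mul_zero, exp_zero]
    ring
  linarith

lemma F_zero (hα : 0 < α) : F α 0 = 1 / α := by
  rw [F_of_nonpos hα le_rfl, mul_zero, exp_zero]

lemma hasDerivAt_F (hα : 0 < α) (t : ℝ) : HasDerivAt (F α) (exp (-α * |t|)) t := by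
  have key : ∀ s : ℝ, F α s = F α 0 + ∫ x in (0:ℝ)..s, exp (-α * |x|) := by
    intro s
    rw [← intervalIntegral.integral_Iic_sub_Iic
      ((EMA.integrable hα).integrableOn) ((EMA.integrable hα).integrableOn),
      F, F, integral_Iic_eq_integral_Iio, integral_Iic_eq_integral_Iio]
    ring
  have : HasDerivAt (fun s => F α 0 + ∫ x in (0:ℝ)..s, exp (-α * |x|))
      (exp (-α * |t|)) t :=
    ((EMA.cont.integral_hasStrictDerivAt 0 t).hasDerivAt).const_add (F α 0)
  exact this.congr_deriv rfl |>.congr_of_eventuallyEq (Eventually.of_forall key) |>.congr_deriv rfl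
end Fbasics

section P2
variable {χ : ℝ → ℝ} {K : NNReal}

lemma abs_deriv_le_of_lip (hχ : LipschitzWith K χ) (y : ℝ) : |deriv χ y| ≤ K := by
  by_cases h : DifferentiableAt ℝ χ y
  · rw [← fderiv_apply_one_eq_deriv]
    calc |(fderiv ℝ χ y : ℝ → ℝ) 1| ≤ ‖fderiv ℝ χ y‖ * ‖(1:ℝ)‖ :=
          (fderiv ℝ χ y).le_opNorm 1
    _ ≤ K := by rw [norm_one, mul_one]; exact norm_fderiv_le_of_lipschitz ℝ hχ
  · rw [deriv_zero_of_not_differentiableAt h]; simp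

lemma ae_diff_div (hχ : LipschitzWith K χ) {n : ℝ} (hn : n ≠ 0) :
    ∀ᵐ x : ℝ, DifferentiableAt ℝ χ (x / n) := by
  have h0 : ∀ᵐ y : ℝ, DifferentiableAt ℝ χ y := hχ.ae_differentiableAt
  rw [ae_iff] at h0 ⊢
  have hq := MeasureTheory.Measure.quasiMeasurePreserving_smul
    (μ := (volume : Measure ℝ)) (inv_ne_zero hn)
  have := hq.preimage_null h0
  convert this using 2
  ext x
  simp [smul_eq_mul, div_eq_inv_mul]

-- deriv of χ(x/n) is zero when χ is locally constant near x/n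
lemma deriv_zero_of_locally_const {f : ℝ → ℝ} {c x : ℝ} (h : ∀ᶠ y in nhds x, f y = c) :
    deriv f x = 0 := by
  have : deriv f x = deriv (fun _ : ℝ => c) x :=
    Filter.EventuallyEq.deriv_eq h
  simp [this]
end P2

noncomputable def uu (α T x : ℝ) : ℝ := F α (x * T)


section P3
variable {α T : ℝ}

lemma hasDerivAt_uu (hα : 0 < α) (hT : 0 < T) (x : ℝ) :
    HasDerivAt (uu α T) (T * exp (-(α * T) * |x|)) x := by
  have h := (hasDerivAt_F hα (x * T)).comp x ((hasDerivAt_id x).mul_const T)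
  have e : exp (-α * |x * T|) * (1 * T) = T * exp (-(α * T) * |x|) := by
    rw [abs_mul, abs_of_pos hT]; ring_nf
  rw [e] at h
  exact h

lemma uu_pos (hα : 0 < α) (x : ℝ) : 0 < uu α T x := F_pos hα _
lemma uu_le (hα : 0 < α) (x : ℝ) : uu α T x ≤ 2 / α := F_le hα _
lemma uu_ge (hα : 0 < α) (hT : 0 < T) {x : ℝ} (hx : 0 ≤ x) : 1 / α ≤ uu α T x := by
  rw [← F_zero hα]
  exact F_mono hα (by positivity)
lemma uu_eq_of_nonpos (hα : 0 < α) (hT : 0 < T) {x : ℝ} (hx : x ≤ 0) :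
    uu α T x = exp ((α * T) * x) / α := by
  rw [uu, F_of_nonpos hα (mul_nonpos_of_nonpos_of_nonneg hx hT.le)]
  ring_nf

lemma continuous_uu (hα : 0 < α) (hT : 0 < T) : Continuous (uu α T) := by
  have : Differentiable ℝ (uu α T) := fun x => (hasDerivAt_uu hα hT x).differentiableAt
  exact this.continuous

lemma hasDerivAt_g {χ : ℝ → ℝ} {ρ n x : ℝ} (hα : 0 < α) (hT : 0 < T) (hn : n ≠ 0)
    (hd : DifferentiableAt ℝ χ (x / n)) :
    HasDerivAt (fun y => uu α T y ^ ρ * χ (y / n))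
      ((ρ * uu α T x ^ (ρ - 1) * (T * exp (-(α * T) * |x|))) * χ (x / n)
        + uu α T x ^ ρ * (deriv χ (x / n) / n)) x := by
  have h1 : HasDerivAt (fun y => uu α T y ^ ρ)
      (ρ * uu α T x ^ (ρ - 1) * (T * exp (-(α * T) * |x|))) x := by
    have := (hasDerivAt_uu hα hT x).rpow_const (p := ρ) (Or.inl (uu_pos hα x).ne')
    convert this using 1; ring
  have h2 : HasDerivAt (fun y : ℝ => χ (y / n)) (deriv χ (x / n) / n) x := by
    have := (hd.hasDerivAt.comp x ((hasDerivAt_id x).div_const n))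
    simpa [Function.comp_def, div_eq_mul_inv] using this
  exact h1.mul h2
end P3


noncomputable def DD (α T ρ : ℝ) (χ : ℝ → ℝ) (n x : ℝ) : ℝ :=
  (ρ * uu α T x ^ (ρ - 1) * (T * exp (-(α * T) * |x|))) * χ (x / n)
    + uu α T x ^ ρ * (deriv χ (x / n) / n)

noncomputable def phi (α θ ρ : ℝ) (χ : ℝ → ℝ) (n x : ℝ) : ℝ :=
  DD α (tan θ) ρ χ n x * (DD α (tan θ) ρ χ n x * F α (x * tan θ)
    - (F α (x * tan θ) ^ ρ * χ (x / n)) * exp (-α * |x| * tan θ) * cot θ)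

noncomputable def psi (α θ ρ : ℝ) (x : ℝ) : ℝ :=
  (ρ * uu α (tan θ) x ^ (ρ - 1) * (tan θ * exp (-(α * tan θ) * |x|))) *
    ((ρ * uu α (tan θ) x ^ (ρ - 1) * (tan θ * exp (-(α * tan θ) * |x|))) * F α (x * tan θ)
      - (F α (x * tan θ) ^ ρ * 1) * exp (-α * |x| * tan θ) * cot θ)

section P4
variable {α θ T ρ n : ℝ} {χ : ℝ → ℝ}

lemma phi_eq_psi (h1 : χ (x / n) = 1) (h0 : deriv χ (x / n) = 0) :
    phi α θ ρ χ n x = psi α θ ρ x := by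
  unfold phi psi DD
  rw [h1, h0]
  ring_nf

lemma phi_eq_zero (h1 : χ (x / n) = 0) (h0 : deriv χ (x / n) = 0) :
    phi α θ ρ χ n x = 0 := by
  unfold phi DD
  rw [h1, h0]
  ring

lemma tan_pos' (hθ : θ ∈ Ioo 0 (π/2)) : 0 < tan θ := tan_pos_of_pos_of_lt_pi_div_two hθ.1 hθ.2
lemma cot_tan (hθ : θ ∈ Ioo 0 (π/2)) : cot θ * tan θ = 1 := by
  have hs : 0 < sin θ := sin_pos_of_pos_of_lt_pi hθ.1 (hθ.2.trans (by linarith [pi_pos]))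
  have hc : 0 < cos θ := cos_pos_of_mem_Ioo ⟨by linarith [pi_pos, hθ.1], hθ.2⟩
  rw [Real.cot_eq_cos_div_sin, Real.tan_eq_sin_div_cos]
  field_simp

lemma cot_pos' (hθ : θ ∈ Ioo 0 (π/2)) : 0 < cot θ := by
  have := cot_tan hθ
  have h := tan_pos' hθ
  nlinarith

lemma psi_eq (hα : 0 < α) (hθ : θ ∈ Ioo 0 (π/2)) (x : ℝ) :
    psi α θ ρ x = ρ * (ρ - cot θ ^ 2) * (uu α (tan θ) x ^ (ρ - 1))^2 * uu α (tan θ) x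
      * (tan θ)^2 * exp (-(α * tan θ) * |x|)^2 := by
  have hT := tan_pos' hθ
  have hu : F α (x * tan θ) ^ ρ = uu α (tan θ) x ^ (ρ - 1) * uu α (tan θ) x := by
    have h := Real.rpow_add_one (x := uu α (tan θ) x) (uu_pos hα x).ne' (ρ - 1)
    rw [sub_add_cancel] at h
    exact h
  have he : exp (-α * |x| * tan θ) = exp (-(α * tan θ) * |x|) := by ring_nf
  have hcot := cot_tan hθ
  unfold psi
  rw [hu, he]
  have hFu : F α (x * tan θ) = uu α (tan θ) x := rfl
  rw [hFu]
  have : cot θ = 1 / tan θ := by field_simp [hT.ne'] at hcot ⊢; linarith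
  rw [this]
  field_simp

lemma psi_nonpos (hα : 0 < α) (hθ : θ ∈ Ioo 0 (π/2)) (hρ : ρ ∈ Ioo 0 (cot θ ^ 2)) (x : ℝ) :
    psi α θ ρ x ≤ 0 := by
  rw [psi_eq hα hθ]
  have h1 : ρ * (ρ - cot θ ^ 2) < 0 := mul_neg_of_pos_of_neg hρ.1 (by linarith [hρ.2])
  have h2 : (0:ℝ) < (uu α (tan θ) x ^ (ρ - 1))^2 * uu α (tan θ) x
      * (tan θ)^2 * exp (-(α * tan θ) * |x|)^2 := by
    have := uu_pos (T := tan θ) hα x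
    have h3 : (0:ℝ) < uu α (tan θ) x ^ (ρ - 1) := rpow_pos_of_pos this _
    have := tan_pos' hθ
    positivity
  nlinarith

lemma psi_neg (hα : 0 < α) (hθ : θ ∈ Ioo 0 (π/2)) (hρ : ρ ∈ Ioo 0 (cot θ ^ 2)) (x : ℝ) :
    psi α θ ρ x < 0 := by
  rw [psi_eq hα hθ]
  have h1 : ρ * (ρ - cot θ ^ 2) < 0 := mul_neg_of_pos_of_neg hρ.1 (by linarith [hρ.2])
  have h2 : (0:ℝ) < (uu α (tan θ) x ^ (ρ - 1))^2 * uu α (tan θ) x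
      * (tan θ)^2 * exp (-(α * tan θ) * |x|)^2 := by
    have := uu_pos (T := tan θ) hα x
    have h3 : (0:ℝ) < uu α (tan θ) x ^ (ρ - 1) := rpow_pos_of_pos this _
    have := tan_pos' hθ
    positivity
  nlinarith

lemma continuous_psi (hα : 0 < α) (hθ : θ ∈ Ioo 0 (π/2)) : Continuous (psi α θ ρ) := by
  have hT := tan_pos' hθ
  have hc := continuous_uu (T := tan θ) hα hT
  have h1 : Continuous (fun x => uu α (tan θ) x ^ (ρ - 1)) := by
    apply hc.rpow_const
    intro x; exact Or.inl (uu_pos hα x).ne'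
  have h2 : Continuous (fun x => uu α (tan θ) x ^ ρ) := by
    apply hc.rpow_const
    intro x; exact Or.inl (uu_pos hα x).ne'
  have habs : Continuous (fun x : ℝ => exp (-(α * tan θ) * |x|)) := by fun_prop
  have habs2 : Continuous (fun x : ℝ => exp (-α * |x| * tan θ)) := by fun_prop
  unfold psi
  have hF : Continuous (fun x => F α (x * tan θ)) := hc
  fun_prop

lemma setInt_psi_neg (hα : 0 < α) (hθ : θ ∈ Ioo 0 (π/2)) (hρ : ρ ∈ Ioo 0 (cot θ ^ 2)) :
    ∫ x in Icc (-1:ℝ) 1, psi α θ ρ x < 0 := by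
  have hcont := continuous_psi (ρ := ρ) hα hθ
  have hint : IntegrableOn (psi α θ ρ) (Icc (-1:ℝ) 1) := hcont.integrableOn_Icc
  have key : 0 < ∫ x in Icc (-1:ℝ) 1, (-psi α θ ρ x) := by
    rw [setIntegral_pos_iff_support_of_nonneg_ae]
    · have hsupp : Function.support (fun x => -psi α θ ρ x) = univ := by
        ext x
        simp only [Function.mem_support, mem_univ, iff_true, ne_eq, neg_eq_zero]
        exact (psi_neg hα hθ hρ x).ne
      rw [hsupp, univ_inter, Real.volume_Icc]
      norm_num
    · filter_upwards with x
      simp only [Pi.zero_apply]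
      nlinarith [psi_nonpos hα hθ hρ x]
    · exact hcont.neg.integrableOn_Icc
  have : ∫ x in Icc (-1:ℝ) 1, (-psi α θ ρ x) = -∫ x in Icc (-1:ℝ) 1, psi α θ ρ x :=
    integral_neg _
  linarith
end P4

section P5
variable {α T θ ρ n K x : ℝ} {χ : ℝ → ℝ}

lemma uu_rpow_le (hα : 0 < α) (hρ : 0 ≤ ρ) (x : ℝ) : uu α T x ^ ρ ≤ (2/α) ^ ρ :=
  rpow_le_rpow (uu_pos hα x).le (uu_le hα x) hρ

lemma uwr_bound (hα : 0 < α) (hT : 0 < T) (hρ : 0 < ρ) (x : ℝ) :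
    uu α T x ^ (ρ - 1) * (T * exp (-(α * T) * |x|))
      ≤ (T * ((1/α) ^ (ρ-1) + (2/α) ^ (ρ-1))) * exp (-(min (ρ*(α*T)) (α*T)) * |x|) := by
  set c := α * T with hc
  have hcpos : 0 < c := by positivity
  set δ := min (ρ * c) c with hδ
  have hδ1 : δ ≤ ρ * c := min_le_left _ _
  have hδ2 : δ ≤ c := min_le_right _ _
  have hC1 : (0:ℝ) ≤ (1/α) ^ (ρ-1) := rpow_nonneg (by positivity) _
  have hC2 : (0:ℝ) ≤ (2/α) ^ (ρ-1) := rpow_nonneg (by positivity) _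
  rcases le_or_gt x 0 with hx | hx
  · have habs : |x| = -x := abs_of_nonpos hx
    rw [uu_eq_of_nonpos hα hT hx, habs]
    have h1 : (exp (c * x) / α) ^ (ρ - 1) = exp (c * x) ^ (ρ-1) * (1/α) ^ (ρ-1) := by
      rw [div_eq_mul_one_div, Real.mul_rpow (exp_pos _).le (by positivity)]
    rw [h1, ← Real.exp_mul]
    have key : exp (c * x * (ρ - 1)) * (1 / α) ^ (ρ - 1) * (T * exp (-c * -x))
        = (T * (1/α) ^ (ρ-1)) * exp (ρ * c * x) := by
      have e2 : exp (c * x * (ρ - 1)) * exp (-c * -x) = exp (ρ * c * x) := by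
        rw [← Real.exp_add, show c * x * (ρ - 1) + -c * -x = ρ * c * x by ring]
      calc exp (c * x * (ρ - 1)) * (1 / α) ^ (ρ - 1) * (T * exp (-c * -x))
          = (T * (1/α) ^ (ρ-1)) * (exp (c * x * (ρ - 1)) * exp (-c * -x)) := by ring
        _ = (T * (1/α) ^ (ρ-1)) * exp (ρ * c * x) := by rw [e2]
    rw [key]
    have hexp : exp (ρ * c * x) ≤ exp (-δ * -x) := by
      apply exp_le_exp.mpr
      nlinarith
    calc T * (1/α) ^ (ρ-1) * exp (ρ * c * x)
        ≤ T * (1/α) ^ (ρ-1) * exp (-δ * -x) := by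
          apply mul_le_mul_of_nonneg_left hexp (by positivity)
      _ ≤ (T * ((1/α) ^ (ρ-1) + (2/α) ^ (ρ-1))) * exp (-δ * -x) := by
          apply mul_le_mul_of_nonneg_right _ (exp_pos _).le
          nlinarith
  · have hx' : 0 ≤ x := hx.le
    have hur : uu α T x ^ (ρ - 1) ≤ (1/α) ^ (ρ-1) + (2/α) ^ (ρ-1) := by
      rcases le_total ρ 1 with hρ1 | hρ1
      · have := Real.rpow_le_rpow_of_nonpos (by positivity : (0:ℝ) < 1/α)
          (uu_ge hα hT hx') (by linarith : ρ - 1 ≤ 0)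
        linarith
      · have := rpow_le_rpow (uu_pos (T := T) hα x).le (uu_le (T := T) hα x)
          (by linarith : (0:ℝ) ≤ ρ - 1)
        linarith
    have hexp : exp (-c * |x|) ≤ exp (-δ * |x|) := by
      apply exp_le_exp.mpr
      have : 0 ≤ |x| := abs_nonneg x
      nlinarith
    have hu0 : 0 ≤ uu α T x ^ (ρ - 1) := (rpow_pos_of_pos (uu_pos hα x) _).le
    calc uu α T x ^ (ρ - 1) * (T * exp (-c * |x|))
        ≤ ((1/α) ^ (ρ-1) + (2/α) ^ (ρ-1)) * (T * exp (-δ * |x|)) := by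
          apply mul_le_mul hur _ (by positivity) (by positivity)
          exact mul_le_mul_of_nonneg_left hexp hT.le
      _ = (T * ((1/α) ^ (ρ-1) + (2/α) ^ (ρ-1))) * exp (-δ * |x|) := by ring

lemma DD_bound (hα : 0 < α) (hT : 0 < T) (hρ : 0 < ρ) (hn : 0 < n) (hK : 0 ≤ K)
    (hχ01 : ∀ t, χ t ∈ Icc (0:ℝ) 1) (hKd : ∀ y, |deriv χ y| ≤ K) (x : ℝ) :
    |DD α T ρ χ n x| ≤ ρ * ((T * ((1/α) ^ (ρ-1) + (2/α) ^ (ρ-1)))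
        * exp (-(min (ρ*(α*T)) (α*T)) * |x|)) + (2/α) ^ ρ * (K / n) := by
  unfold DD
  refine (abs_add_le _ _).trans ?_
  have hu0 : 0 ≤ uu α T x ^ (ρ - 1) := (rpow_pos_of_pos (uu_pos hα x) _).le
  have h1 : |ρ * uu α T x ^ (ρ - 1) * (T * exp (-(α * T) * |x|)) * χ (x / n)|
      ≤ ρ * ((T * ((1/α) ^ (ρ-1) + (2/α) ^ (ρ-1))) * exp (-(min (ρ*(α*T)) (α*T)) * |x|)) := by
    rw [abs_mul]
    have hc := hχ01 (x / n)
    have hχab : |χ (x / n)| ≤ 1 := abs_le.mpr ⟨by linarith [hc.1], hc.2⟩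
    have ht1 : |ρ * uu α T x ^ (ρ - 1) * (T * exp (-(α * T) * |x|))|
        = ρ * (uu α T x ^ (ρ - 1) * (T * exp (-(α * T) * |x|))) := by
      rw [abs_of_nonneg (by positivity)]; ring
    rw [ht1]
    calc ρ * (uu α T x ^ (ρ - 1) * (T * exp (-(α * T) * |x|))) * |χ (x / n)|
        ≤ ρ * (uu α T x ^ (ρ - 1) * (T * exp (-(α * T) * |x|))) * 1 := by
          apply mul_le_mul_of_nonneg_left hχab (by positivity)
      _ ≤ ρ * ((T * ((1/α) ^ (ρ-1) + (2/α) ^ (ρ-1))) * exp (-(min (ρ*(α*T)) (α*T)) * |x|)) := by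
          rw [mul_one]
          exact mul_le_mul_of_nonneg_left (uwr_bound hα hT hρ x) hρ.le
  have h2 : |uu α T x ^ ρ * (deriv χ (x / n) / n)| ≤ (2/α) ^ ρ * (K / n) := by
    rw [abs_mul]
    apply mul_le_mul
    · rw [abs_of_nonneg (rpow_pos_of_pos (uu_pos hα x) _).le]
      exact uu_rpow_le hα hρ.le x
    · rw [abs_div, abs_of_pos hn]
      gcongr
      exact hKd _
    · exact abs_nonneg _
    · positivity
  linarith
end P5

noncomputable def aaF (α T ρ K n : ℝ) : ℝ :=
  ρ * ((T * ((1/α) ^ (ρ-1) + (2/α) ^ (ρ-1))) * exp (-(min (ρ*(α*T)) (α*T)) * n))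
    + (2/α) ^ ρ * (K / n)

noncomputable def bbF (α θ ρ K n : ℝ) : ℝ :=
  aaF α (tan θ) ρ K n * ((2/α) * aaF α (tan θ) ρ K n
    + (2/α) ^ ρ * cot θ * exp (-(α * tan θ) * n))

noncomputable def aGF (α T ρ K : ℝ) : ℝ :=
  ρ * (T * ((1/α) ^ (ρ-1) + (2/α) ^ (ρ-1))) + (2/α) ^ ρ * K

noncomputable def MMF (α θ ρ K : ℝ) : ℝ :=
  aGF α (tan θ) ρ K * ((2/α) * aGF α (tan θ) ρ K + (2/α) ^ ρ * cot θ)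

section P6
variable {α T θ ρ n K x : ℝ} {χ : ℝ → ℝ}

lemma delta_pos (hα : 0 < α) (hT : 0 < T) (hρ : 0 < ρ) : 0 < min (ρ*(α*T)) (α*T) :=
  lt_min (by positivity) (by positivity)

lemma aaF_nonneg (hα : 0 < α) (hT : 0 < T) (hρ : 0 < ρ) (hK : 0 ≤ K) (hn : 0 < n) :
    0 ≤ aaF α T ρ K n := by
  unfold aaF
  have h1 : (0:ℝ) ≤ (1/α) ^ (ρ-1) := rpow_nonneg (by positivity) _
  have h2 : (0:ℝ) ≤ (2/α) ^ (ρ-1) := rpow_nonneg (by positivity) _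
  positivity

lemma DD_le_aaF (hα : 0 < α) (hT : 0 < T) (hρ : 0 < ρ) (hn : 0 < n) (hK : 0 ≤ K)
    (hχ01 : ∀ t, χ t ∈ Icc (0:ℝ) 1) (hKd : ∀ y, |deriv χ y| ≤ K) (hnx : n ≤ |x|) :
    |DD α T ρ χ n x| ≤ aaF α T ρ K n := by
  refine (DD_bound hα hT hρ hn hK hχ01 hKd x).trans ?_
  unfold aaF
  have h1 : (0:ℝ) ≤ (1/α) ^ (ρ-1) := rpow_nonneg (by positivity) _
  have h2 : (0:ℝ) ≤ (2/α) ^ (ρ-1) := rpow_nonneg (by positivity) _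
  have hδ := delta_pos hα hT hρ
  have hexp : exp (-(min (ρ*(α*T)) (α*T)) * |x|) ≤ exp (-(min (ρ*(α*T)) (α*T)) * n) := by
    apply exp_le_exp.mpr; nlinarith
  have hC : (0:ℝ) ≤ T * ((1/α) ^ (ρ-1) + (2/α) ^ (ρ-1)) := by positivity
  have := mul_le_mul_of_nonneg_left (mul_le_mul_of_nonneg_left hexp hC) hρ.le
  linarith

lemma aGF_nonneg (hα : 0 < α) (hT : 0 < T) (hρ : 0 < ρ) (hK : 0 ≤ K) :
    0 ≤ aGF α T ρ K := by
  unfold aGF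
  have h1 : (0:ℝ) ≤ (1/α) ^ (ρ-1) := rpow_nonneg (by positivity) _
  have h2 : (0:ℝ) ≤ (2/α) ^ (ρ-1) := rpow_nonneg (by positivity) _
  positivity

lemma DD_le_aGF (hα : 0 < α) (hT : 0 < T) (hρ : 0 < ρ) (hn : 1 ≤ n) (hK : 0 ≤ K)
    (hχ01 : ∀ t, χ t ∈ Icc (0:ℝ) 1) (hKd : ∀ y, |deriv χ y| ≤ K) (x : ℝ) :
    |DD α T ρ χ n x| ≤ aGF α T ρ K := by
  refine (DD_bound hα hT hρ (by linarith) hK hχ01 hKd x).trans ?_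
  unfold aGF
  have h1 : (0:ℝ) ≤ (1/α) ^ (ρ-1) := rpow_nonneg (by positivity) _
  have h2 : (0:ℝ) ≤ (2/α) ^ (ρ-1) := rpow_nonneg (by positivity) _
  have hδ := delta_pos hα hT hρ
  have hexp : exp (-(min (ρ*(α*T)) (α*T)) * |x|) ≤ 1 :=
    exp_le_one_iff.mpr (by nlinarith [abs_nonneg x])
  have hC : (0:ℝ) ≤ T * ((1/α) ^ (ρ-1) + (2/α) ^ (ρ-1)) := by positivity
  have hQ : (0:ℝ) ≤ (2/α) ^ ρ := rpow_nonneg (by positivity) _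
  have hKn : K / n ≤ K := div_le_self hK hn
  have h3 := mul_le_mul_of_nonneg_left (mul_le_mul_of_nonneg_left hexp hC) hρ.le
  have h4 := mul_le_mul_of_nonneg_left hKn hQ
  nlinarith

lemma abs_phi_le {a E : ℝ} (hα : 0 < α) (hθ : θ ∈ Ioo 0 (π/2)) (hρ : 0 < ρ)
    (hχ01 : ∀ t, χ t ∈ Icc (0:ℝ) 1)
    (hDD : |DD α (tan θ) ρ χ n x| ≤ a) (hE : exp (-(α * tan θ) * |x|) ≤ E) :
    |phi α θ ρ χ n x| ≤ a * ((2/α) * a + (2/α) ^ ρ * cot θ * E) := by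
  have hco := cot_pos' hθ
  have hT := tan_pos' hθ
  have ha : 0 ≤ a := (abs_nonneg _).trans hDD
  have hQ : (0:ℝ) ≤ (2/α) ^ ρ := rpow_nonneg (by positivity) _
  have hFpos : 0 < F α (x * tan θ) := uu_pos (T := tan θ) hα x
  have hFle : F α (x * tan θ) ≤ 2/α := uu_le (T := tan θ) hα x
  have hufle : F α (x * tan θ) ^ ρ ≤ (2/α) ^ ρ := uu_rpow_le hα hρ.le x
  have hufpos : (0:ℝ) < F α (x * tan θ) ^ ρ := rpow_pos_of_pos hFpos _
  have hχx := hχ01 (x / n)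
  have hea : exp (-α * |x| * tan θ) = exp (-(α * tan θ) * |x|) := by ring_nf
  have hE0 : 0 ≤ E := (exp_pos _).le.trans hE
  have hX : |DD α (tan θ) ρ χ n x * F α (x * tan θ)
      - (F α (x * tan θ) ^ ρ * χ (x / n)) * exp (-α * |x| * tan θ) * cot θ|
      ≤ (2/α) * a + (2/α) ^ ρ * cot θ * E := by
    have h1 : |DD α (tan θ) ρ χ n x * F α (x * tan θ)| ≤ (2/α) * a := by
      rw [abs_mul, abs_of_pos hFpos]
      calc |DD α (tan θ) ρ χ n x| * F α (x * tan θ) ≤ a * (2/α) :=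
        mul_le_mul hDD hFle hFpos.le ha
      _ = (2/α) * a := by ring
    have h2 : |(F α (x * tan θ) ^ ρ * χ (x / n)) * exp (-α * |x| * tan θ) * cot θ|
        ≤ (2/α) ^ ρ * cot θ * E := by
      have hnn : 0 ≤ (F α (x * tan θ) ^ ρ * χ (x / n)) * exp (-α * |x| * tan θ) * cot θ :=
        mul_nonneg (mul_nonneg (mul_nonneg hufpos.le hχx.1) (exp_pos _).le) hco.le
      rw [abs_of_nonneg hnn, hea]
      calc (F α (x * tan θ) ^ ρ * χ (x / n)) * exp (-(α * tan θ) * |x|) * cot θ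
          ≤ ((2/α) ^ ρ * 1) * E * cot θ := by
            apply mul_le_mul_of_nonneg_right _ hco.le
            apply mul_le_mul _ hE (exp_pos _).le (by positivity)
            calc F α (x * tan θ) ^ ρ * χ (x / n) ≤ F α (x * tan θ) ^ ρ * 1 :=
              mul_le_mul_of_nonneg_left hχx.2 hufpos.le
            _ ≤ (2/α) ^ ρ * 1 := by rw [mul_one, mul_one]; exact hufle
        _ = (2/α) ^ ρ * cot θ * E := by ring
    calc _ ≤ |DD α (tan θ) ρ χ n x * F α (x * tan θ)|
          + |(F α (x * tan θ) ^ ρ * χ (x / n)) * exp (-α * |x| * tan θ) * cot θ| :=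
        abs_sub _ _
      _ ≤ (2/α) * a + (2/α) ^ ρ * cot θ * E := add_le_add h1 h2
  unfold phi
  rw [abs_mul]
  exact mul_le_mul hDD hX (abs_nonneg _) ha

end P6


section P7
variable {α T θ ρ n K x y : ℝ} {χ : ℝ → ℝ}

lemma chi_zero_far (hχ0 : ∀ t, 2 ≤ |t| → χ t = 0) (h : 2 < |y|) :
    χ y = 0 ∧ deriv χ y = 0 := by
  refine ⟨hχ0 y h.le, ?_⟩
  apply deriv_zero_of_locally_const (c := 0)
  have hopen : IsOpen {t : ℝ | 2 < |t|} := isOpen_lt continuous_const continuous_abs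
  filter_upwards [hopen.mem_nhds h] with t ht
  exact hχ0 t (le_of_lt ht)

lemma chi_one_near (hχ1 : ∀ t, |t| ≤ 1 → χ t = 1) (h : |y| < 1) :
    χ y = 1 ∧ deriv χ y = 0 := by
  refine ⟨hχ1 y h.le, ?_⟩
  apply deriv_zero_of_locally_const (c := 1)
  have hopen : IsOpen {t : ℝ | |t| < 1} := isOpen_lt continuous_abs continuous_const
  filter_upwards [hopen.mem_nhds h] with t ht
  exact hχ1 t (le_of_lt ht)

lemma phi_tail_le (hα : 0 < α) (hθ : θ ∈ Ioo 0 (π/2)) (hρ : 0 < ρ) (hn : 0 < n)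
    (hK : 0 ≤ K) (hχ01 : ∀ t, χ t ∈ Icc (0:ℝ) 1) (hKd : ∀ y, |deriv χ y| ≤ K)
    (hnx : n ≤ |x|) : phi α θ ρ χ n x ≤ bbF α θ ρ K n := by
  have hT := tan_pos' hθ
  have hE : exp (-(α * tan θ) * |x|) ≤ exp (-(α * tan θ) * n) := by
    apply exp_le_exp.mpr
    have : 0 < α * tan θ := by positivity
    nlinarith
  refine (le_abs_self _).trans ((abs_phi_le hα hθ hρ hχ01
    (DD_le_aaF hα hT hρ hn hK hχ01 hKd hnx) hE).trans ?_)
  unfold bbF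
  exact le_rfl

lemma phi_glob_le (hα : 0 < α) (hθ : θ ∈ Ioo 0 (π/2)) (hρ : 0 < ρ) (hn : 1 ≤ n)
    (hK : 0 ≤ K) (hχ01 : ∀ t, χ t ∈ Icc (0:ℝ) 1) (hKd : ∀ y, |deriv χ y| ≤ K) (x : ℝ) :
    |phi α θ ρ χ n x| ≤ MMF α θ ρ K := by
  have hT := tan_pos' hθ
  have hE : exp (-(α * tan θ) * |x|) ≤ 1 :=
    exp_le_one_iff.mpr (by nlinarith [abs_nonneg x, mul_pos hα hT])
  have h := abs_phi_le hα hθ hρ hχ01 (DD_le_aGF hα hT hρ hn hK hχ01 hKd x) hE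
  rw [mul_one] at h
  exact h

lemma phi_eq_psi_of_small (hα : 0 < α) (hθ : θ ∈ Ioo 0 (π/2)) (hn : 0 < n)
    (hχ1 : ∀ t, |t| ≤ 1 → χ t = 1) (hx : |x| < n) :
    phi α θ ρ χ n x = psi α θ ρ x := by
  have h : |x / n| < 1 := by
    rw [abs_div, abs_of_pos hn, div_lt_one hn]
    exact hx
  obtain ⟨h1, h0⟩ := chi_one_near hχ1 h
  exact phi_eq_psi h1 h0

lemma phi_eq_zero_of_big (hn : 0 < n) (hχ0 : ∀ t, 2 ≤ |t| → χ t = 0) (hx : 2 * n < |x|) :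
    phi α θ ρ χ n x = 0 := by
  have h : 2 < |x / n| := by
    rw [abs_div, abs_of_pos hn, lt_div_iff₀ hn]
    linarith
  obtain ⟨h1, h0⟩ := chi_zero_far hχ0 h
  exact phi_eq_zero h1 h0

lemma measurable_phi (hα : 0 < α) (hθ : θ ∈ Ioo 0 (π/2)) (hlip : Continuous χ) :
    Measurable (phi α θ ρ χ n) := by
  have hT := tan_pos' hθ
  have hc := continuous_uu (T := tan θ) hα hT
  have h1 : Continuous (fun x => uu α (tan θ) x ^ (ρ - 1)) :=
    hc.rpow_const fun x => Or.inl (uu_pos hα x).ne'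
  have h2 : Continuous (fun x => uu α (tan θ) x ^ ρ) :=
    hc.rpow_const fun x => Or.inl (uu_pos hα x).ne'
  have habs : Continuous (fun x : ℝ => exp (-(α * tan θ) * |x|)) := by fun_prop
  have habs2 : Continuous (fun x : ℝ => exp (-α * |x| * tan θ)) := by fun_prop
  have hχc : Continuous (fun x : ℝ => χ (x / n)) := hlip.comp (continuous_id.div_const n)
  have hdm : Measurable (fun x : ℝ => deriv χ (x / n)) :=
    (measurable_deriv χ).comp (measurable_id.div_const n)
  have hDDm : Measurable (DD α (tan θ) ρ χ n) := by
    unfold DD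
    exact ((((continuous_const.mul h1).mul (continuous_const.mul habs)).mul hχc).measurable).add
      (h2.measurable.mul (hdm.div_const n))
  unfold phi
  exact hDDm.mul ((hDDm.mul hc.measurable).sub
    ((((h2.mul hχc).mul habs2).mul continuous_const).measurable))

lemma integrable_phi (hα : 0 < α) (hθ : θ ∈ Ioo 0 (π/2)) (hρ : 0 < ρ) (hn : 1 ≤ n)
    (hK : 0 ≤ K) (hlip : Continuous χ) (hχ01 : ∀ t, χ t ∈ Icc (0:ℝ) 1)
    (hKd : ∀ y, |deriv χ y| ≤ K) (hχ0 : ∀ t, 2 ≤ |t| → χ t = 0) :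
    Integrable (phi α θ ρ χ n) := by
  have hn0 : (0:ℝ) < n := by linarith
  have hm := measurable_phi (ρ := ρ) (n := n) hα hθ hlip
  have hind : Integrable ((Icc (-(2*n)) (2*n)).indicator (fun _ => MMF α θ ρ K)) := by
    apply IntegrableOn.integrable_indicator _ measurableSet_Icc
    exact integrableOn_const measure_Icc_lt_top.ne
  refine hind.mono' hm.aestronglyMeasurable (ae_of_all _ fun x => ?_)
  by_cases hx : x ∈ Icc (-(2*n)) (2*n)
  · rw [indicator_of_mem hx]
    rw [Real.norm_eq_abs]
    exact phi_glob_le hα hθ hρ hn hK hχ01 hKd x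
  · rw [indicator_of_notMem hx]
    have hbig : 2 * n < |x| := by
      simp only [mem_Icc, not_and_or, not_le] at hx
      rcases hx with h | h
      · rw [abs_of_neg (by linarith)]; linarith
      · rw [abs_of_pos (by linarith)]; linarith
    rw [Real.norm_eq_abs, phi_eq_zero_of_big hn0 hχ0 hbig]
    simp

lemma Rfun_eq_integral_phi {Kn : NNReal} (hα : 0 < α) (hθ : θ ∈ Ioo 0 (π/2))
    (hlip : LipschitzWith Kn χ) (hn : 0 < n) :
    Rfun α θ (fun x => F α (x * tan θ) ^ ρ * χ (x / n)) = ∫ x, phi α θ ρ χ n x := by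
  unfold Rfun
  apply integral_congr_ae
  filter_upwards [ae_diff_div hlip hn.ne'] with x hd
  have hder : deriv (fun y : ℝ => F α (y * tan θ) ^ ρ * χ (y / n)) x
      = DD α (tan θ) ρ χ n x := by
    exact HasDerivAt.deriv (by exact hasDerivAt_g hα (tan_pos' hθ) hn.ne' hd)
  rw [hder]
  rfl
end P7

section P8
variable {α θ ρ K : ℝ}

lemma tendsto_mul_exp_neg {δ : ℝ} (hδ : 0 < δ) :
    Tendsto (fun n : ℝ => n * exp (-δ * n)) atTop (nhds 0) := by
  have h := tendsto_pow_mul_exp_neg_atTop_nhds_zero 1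
  have h2 : Tendsto (fun n : ℝ => δ * n) atTop atTop :=
    Tendsto.const_mul_atTop hδ tendsto_id
  have h3 := (h.comp h2).const_mul δ⁻¹
  rw [mul_zero] at h3
  refine h3.congr fun n => ?_
  simp only [Function.comp_apply, pow_one]
  field_simp

lemma tendsto_exp_neg_mul {δ : ℝ} (hδ : 0 < δ) :
    Tendsto (fun n : ℝ => exp (-δ * n)) atTop (nhds 0) := by
  have h2 : Tendsto (fun n : ℝ => δ * n) atTop atTop :=
    Tendsto.const_mul_atTop hδ tendsto_id
  have := tendsto_exp_neg_atTop_nhds_zero.comp h2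
  refine this.congr fun n => ?_
  simp [Function.comp_apply, neg_mul]

lemma tendsto_aaF (hα : 0 < α) (hT : 0 < tan θ) (hρ : 0 < ρ) :
    Tendsto (fun n : ℝ => aaF α (tan θ) ρ K n) atTop (nhds 0) := by
  have hδ := delta_pos hα hT hρ
  have e1 := (tendsto_exp_neg_mul hδ).const_mul
    (ρ * (tan θ * ((1/α) ^ (ρ-1) + (2/α) ^ (ρ-1))))
  have e2 : Tendsto (fun n : ℝ => K / n) atTop (nhds 0) :=
    Tendsto.div_atTop tendsto_const_nhds tendsto_id
  have e3 := e2.const_mul ((2/α) ^ ρ)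
  have := e1.add e3
  rw [mul_zero, mul_zero, add_zero] at this
  refine this.congr fun n => ?_
  unfold aaF
  ring

lemma tendsto_n_aaF (hα : 0 < α) (hT : 0 < tan θ) (hρ : 0 < ρ) :
    Tendsto (fun n : ℝ => n * aaF α (tan θ) ρ K n) atTop (nhds ((2/α) ^ ρ * K)) := by
  have hδ := delta_pos hα hT hρ
  have e1 := (tendsto_mul_exp_neg hδ).const_mul
    (ρ * (tan θ * ((1/α) ^ (ρ-1) + (2/α) ^ (ρ-1))))
  have := e1.add (tendsto_const_nhds (x := (2/α) ^ ρ * K) (f := atTop))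
  rw [mul_zero, zero_add] at this
  refine Tendsto.congr' ?_ this
  filter_upwards [eventually_ge_atTop (1:ℝ)] with n hn
  have hn0 : n ≠ 0 := by linarith
  unfold aaF
  field_simp

lemma tendsto_bbF (hα : 0 < α) (hθ : θ ∈ Ioo 0 (π/2)) (hρ : 0 < ρ) :
    Tendsto (fun n : ℝ => 4 * n * bbF α θ ρ K n) atTop (nhds 0) := by
  have hT := tan_pos' hθ
  have haa := tendsto_aaF (K := K) hα hT hρ
  have hX : Tendsto (fun n : ℝ => (2/α) * aaF α (tan θ) ρ K n
      + (2/α) ^ ρ * cot θ * exp (-(α * tan θ) * n)) atTop (nhds 0) := by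
    have e1 := haa.const_mul (2/α)
    have e2 := (tendsto_exp_neg_mul (show 0 < α * tan θ by positivity)).const_mul
      ((2/α) ^ ρ * cot θ)
    have := e1.add e2
    rw [mul_zero, mul_zero, add_zero] at this
    exact this
  have := ((tendsto_n_aaF (K := K) hα hT hρ).mul hX).const_mul 4
  rw [mul_zero, mul_zero] at this
  refine this.congr fun n => ?_
  unfold bbF
  ring
end P8


/-- `R(h_n) < 0` for all sufficiently large `n`, where
`h_n = g_ρ · χ(·/n)`. -/
theorem R_of_h_n_neg (α θ : ℝ) (hα : 0 < α) (hθ : θ ∈ Ioo 0 (π/2))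
    (ρ : ℝ) (hρ : ρ ∈ Ioo 0 (cot θ ^ 2))
    (χ : ℝ → ℝ) (hχlip : ∃ K, LipschitzWith K χ)
    (hχ01 : ∀ t, χ t ∈ Icc (0:ℝ) 1)
    (hχ1 : ∀ t, |t| ≤ 1 → χ t = 1)
    (hχ0 : ∀ t, 2 ≤ |t| → χ t = 0) :
    ∃ n₀ > (0:ℝ), ∀ n ≥ n₀,
      Rfun α θ (fun x => F α (x * tan θ) ^ ρ * χ (x / n)) < 0 := by
  obtain ⟨Kn, hlip⟩ := hχlip
  set K : ℝ := (Kn : ℝ) with hKdef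
  have hK0 : (0:ℝ) ≤ K := Kn.coe_nonneg
  have hKd : ∀ y, |deriv χ y| ≤ K := abs_deriv_le_of_lip hlip
  have hT := tan_pos' hθ
  have hρ0 := hρ.1
  have hcont : Continuous χ := hlip.continuous
  have hc₀ : ∫ x in Icc (-1:ℝ) 1, psi α θ ρ x < 0 := setInt_psi_neg hα hθ hρ
  set c₀ := ∫ x in Icc (-1:ℝ) 1, psi α θ ρ x with hc₀def
  have hev : ∀ᶠ n in atTop, 4 * n * bbF α θ ρ K n < -c₀ :=
    (tendsto_bbF (K := K) hα hθ hρ0).eventually_lt_const (by linarith)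
  obtain ⟨m, hm⟩ := eventually_atTop.mp hev
  refine ⟨max m 2, lt_of_lt_of_le (by norm_num) (le_max_right m 2), fun n hn => ?_⟩
  have hn2 : (2:ℝ) ≤ n := le_trans (le_max_right m 2) hn
  have hnm : m ≤ n := le_trans (le_max_left m 2) hn
  have hn1 : (1:ℝ) ≤ n := by linarith
  have hn0 : (0:ℝ) < n := by linarith
  have hint := integrable_phi (ρ := ρ) hα hθ hρ0 hn1 hK0 hcont hχ01 hKd hχ0
  rw [Rfun_eq_integral_phi hα hθ hlip hn0]
  rw [← integral_add_compl (measurableSet_Icc : MeasurableSet (Icc (-1:ℝ) 1)) hint]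
  have hmain : ∫ x in Icc (-1:ℝ) 1, phi α θ ρ χ n x = c₀ := by
    apply setIntegral_congr_fun measurableSet_Icc
    intro x hx
    apply phi_eq_psi_of_small hα hθ hn0 hχ1
    have : |x| ≤ 1 := abs_le.mpr ⟨hx.1, hx.2⟩
    linarith
  have hbb : 0 ≤ bbF α θ ρ K n := by
    have h1 := aaF_nonneg (K := K) (n := n) hα hT hρ0 hK0 hn0
    have h2 := cot_pos' hθ
    have hQ : (0:ℝ) ≤ (2/α) ^ ρ := rpow_nonneg (by positivity) _
    unfold bbF
    positivity
  have htail : ∫ x in (Icc (-1:ℝ) 1)ᶜ, phi α θ ρ χ n x ≤ 4 * n * bbF α θ ρ K n := by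
    set ω := (Icc (-(2*n)) (2*n)).indicator (fun _ : ℝ => bbF α θ ρ K n) with hω
    have hωint : Integrable ω :=
      IntegrableOn.integrable_indicator
        (integrableOn_const measure_Icc_lt_top.ne) measurableSet_Icc
    have h1 : ∫ x in (Icc (-1:ℝ) 1)ᶜ, phi α θ ρ χ n x ≤ ∫ x in (Icc (-1:ℝ) 1)ᶜ, ω x := by
      apply setIntegral_mono_on hint.integrableOn hωint.integrableOn
        measurableSet_Icc.compl
      intro x hx
      by_cases hcase : x ∈ Icc (-(2*n)) (2*n)
      · rw [hω, indicator_of_mem hcase]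
        by_cases hcase2 : |x| < n
        · rw [phi_eq_psi_of_small hα hθ hn0 hχ1 hcase2]
          exact (psi_nonpos hα hθ hρ x).trans hbb
        · exact phi_tail_le hα hθ hρ0 hn0 hK0 hχ01 hKd (not_lt.mp hcase2)
      · rw [hω, indicator_of_notMem hcase]
        have hbig : 2*n < |x| := by
          simp only [mem_Icc, not_and_or, not_le] at hcase
          rcases hcase with h | h
          · rw [abs_of_neg (by linarith)]; linarith
          · rw [abs_of_pos (by linarith)]; linarith
        rw [phi_eq_zero_of_big hn0 hχ0 hbig]
    have h2 : ∫ x in (Icc (-1:ℝ) 1)ᶜ, ω x ≤ ∫ x, ω x := by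
      apply setIntegral_le_integral hωint
      filter_upwards with x
      exact indicator_nonneg (fun _ _ => hbb) x
    have h3 : ∫ x, ω x = (volume (Icc (-(2*n)) (2*n))).toReal • bbF α θ ρ K n :=
      integral_indicator_const _ measurableSet_Icc
    have h4 : (volume (Icc (-(2*n)) (2*n))).toReal = 4*n := by
      rw [Real.volume_Icc, ENNReal.toReal_ofReal (by linarith)]; ring
    rw [h3, h4, smul_eq_mul] at h2
    linarith
  have hfin := hm n hnm
  rw [hmain]
  linarith
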